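/- Let Y be a mean-zero random variable with variance σ²>0 and let Y* be defined on the same space with Y*-Y ≤ c almost surely for some c>0. Suppose the moment generating function m(s)=E[e^{sY}] exists for all s ∈ [0,1/c), and suppose there are finite constants B₁, B₂ ≥ 0 such that for all s ∈ (0,1/c), m'(s) ≤ ((σ²+B₂)s/(1-sc))·m(s) + B₁·m(s). Then for all t > 0, P(Y ≥ t) ≤ exp(-t(t-2B₁)/(2(σ²+B₂+ct))). -/

import Mathlib

open MeasureTheory ProbabilityTheory

/-- concentration from the mgf differential inequality. -/
theorem concentration_from_mgf_ode
    {Ω : Type*} [MeasurableSpace Ω] (μ : Measure Ω) [IsProbabilityMeasure μ]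
    (Y Ystar : Ω → ℝ) (σ2 c B1 B2 : ℝ) (m m' : ℝ → ℝ)
    (hY : Measurable Y) (hYstar : Measurable Ystar)
    (hmean : ∫ ω, Y ω ∂μ = 0) (hvar : variance Y μ = σ2) (hσ : 0 < σ2)
    (hc : 0 < c) (hB1 : 0 ≤ B1) (hB2 : 0 ≤ B2)
    (hcoupling : ∀ᵐ ω ∂μ, Ystar ω - Y ω ≤ c)
    (hm : ∀ s, m s = ∫ ω, Real.exp (s * Y ω) ∂μ)
    (hmgf : ∀ s ∈ Set.Ico 0 (1 / c), Integrable (fun ω => Real.exp (s * Y ω)) μ)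
    (hderiv : ∀ s ∈ Set.Ioo 0 (1 / c), HasDerivAt m (m' s) s)
    (hineq : ∀ s ∈ Set.Ioo 0 (1 / c),
      m' s ≤ (σ2 + B2) * s / (1 - s * c) * m s + B1 * m s) :
    ∀ t > 0, (μ {ω | t ≤ Y ω}).toReal
      ≤ Real.exp (-(t * (t - 2 * B1)) / (2 * (σ2 + B2 + c * t))) := by
  intro t ht
  set D : ℝ := σ2 + B2 + c * t with hD
  have hDpos : 0 < D := by positivity
  set s : ℝ := t / D with hs
  have hspos : 0 < s := div_pos ht hDpos
  have hsc : s * c < 1 := by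
    rw [hs, div_mul_eq_mul_div, div_lt_one hDpos, hD]
    nlinarith
  have hslt : s < 1 / c := (lt_div_iff₀ hc).mpr hsc
  have h1sc : D * (1 - s * c) = σ2 + B2 := by
    rw [hs]; field_simp; rw [hD]; ring
  -- m 0 = 1
  have hm0 : m 0 = 1 := by
    rw [hm 0]; simp
  -- positivity of m on [0, 1/c)
  have hmpos : ∀ u ∈ Set.Ico (0:ℝ) (1/c), 0 < m u := by
    intro u hu
    rw [hm u]
    exact integral_exp_pos (hmgf u hu)
  -- continuity of m at 0 from the right (dominated convergence)
  have hmeq : m = fun u => ∫ ω, Real.exp (u * Y ω) ∂μ := funext hm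
  have hcont0 : ContinuousWithinAt m (Set.Icc 0 s) 0 := by
    rw [hmeq]
    apply continuousWithinAt_of_dominated (bound := fun ω => 1 + Real.exp (s * Y ω))
    · filter_upwards with u
      exact ((hY.const_mul u).exp).aestronglyMeasurable
    · filter_upwards [self_mem_nhdsWithin] with u hu
      filter_upwards with ω
      rw [Real.norm_eq_abs, Real.abs_exp]
      rcases le_or_gt (Y ω) 0 with hy | hy
      · have h1 : u * Y ω ≤ 0 := mul_nonpos_of_nonneg_of_nonpos hu.1 hy
        have := Real.exp_le_one_iff.mpr h1
        nlinarith [Real.exp_pos (s * Y ω)]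
      · have h1 : u * Y ω ≤ s * Y ω := mul_le_mul_of_nonneg_right hu.2 hy.le
        have := Real.exp_le_exp.mpr h1
        nlinarith
    · exact (integrable_const 1).add (hmgf s ⟨hspos.le, hslt⟩)
    · filter_upwards with ω
      exact (Real.continuous_exp.comp (continuous_id.mul continuous_const)).continuousWithinAt
  have hmc : ContinuousOn m (Set.Icc 0 s) := by
    intro x hx
    rcases eq_or_lt_of_le hx.1 with h0 | h0
    · rw [← h0]; exact hcont0
    · exact ((hderiv x ⟨h0, lt_of_le_of_lt hx.2 hslt⟩).continuousAt).continuousWithinAt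
  -- auxiliary function
  set φ : ℝ → ℝ := fun u => -(D * u ^ 2 / 2 + B1 * u) with hφdef
  set h : ℝ → ℝ := fun u => m u * Real.exp (φ u) with hhdef
  have hφderiv : ∀ u : ℝ, HasDerivAt φ (-(D * u + B1)) u := by
    intro u
    have h1 : HasDerivAt (fun u : ℝ => D * u ^ 2 / 2 + B1 * u) (D * u + B1) u := by
      have h2 := (((hasDerivAt_pow 2 u).const_mul D).div_const 2).add
        ((hasDerivAt_id u).const_mul B1)
      exact h2.congr_deriv (by norm_num; ring)
    exact h1.neg
  have hhderiv : ∀ u ∈ Set.Ioo 0 s,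
      HasDerivAt h (m' u * Real.exp (φ u) + m u * (Real.exp (φ u) * (-(D * u + B1)))) u := by
    intro u hu
    have huc : u ∈ Set.Ioo 0 (1/c) := ⟨hu.1, hu.2.trans hslt⟩
    exact (hderiv u huc).mul ((hφderiv u).exp)
  have hanti : AntitoneOn h (Set.Icc 0 s) := by
    apply antitoneOn_of_deriv_nonpos (convex_Icc 0 s)
    · exact hmc.mul (Real.continuous_exp.comp (by fun_prop)).continuousOn
    · intro u hu
      rw [interior_Icc] at hu
      exact ((hhderiv u hu).differentiableAt).differentiableWithinAt
    · intro u hu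
      rw [interior_Icc] at hu
      rw [(hhderiv u hu).deriv]
      have huc : u ∈ Set.Ioo 0 (1/c) := ⟨hu.1, hu.2.trans hslt⟩
      have hmu : 0 < m u := hmpos u ⟨hu.1.le, huc.2⟩
      have huc1 : 0 < 1 - u * c := by
        have : u * c < s * c := by
          exact mul_lt_mul_of_pos_right hu.2 hc
        linarith
      have hkey : m' u ≤ (D * u + B1) * m u := by
        have h1 := hineq u huc
        have h2 : (σ2 + B2) * u / (1 - u * c) ≤ D * u := by
          rw [div_le_iff₀ huc1]
          have : D * (1 - u * c) ≥ σ2 + B2 := by nlinarith [hu.2, mul_lt_mul_of_pos_right hu.2 hc]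
          nlinarith [hu.1.le]
        have h3 := mul_le_mul_of_nonneg_right h2 hmu.le
        calc m' u ≤ (σ2 + B2) * u / (1 - u * c) * m u + B1 * m u := h1
          _ ≤ D * u * m u + B1 * m u := by linarith
          _ = (D * u + B1) * m u := by ring
      have hE : 0 < Real.exp (φ u) := Real.exp_pos _
      nlinarith [mul_le_mul_of_nonneg_right hkey hE.le]
  -- m s ≤ exp(D s²/2 + B1 s)
  have hle : h s ≤ h 0 :=
    hanti ⟨le_refl 0, hspos.le⟩ ⟨hspos.le, le_refl s⟩ hspos.le
  have hh0 : h 0 = 1 := by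
    simp [hhdef, hφdef, hm0]
  have key : m s ≤ Real.exp (D * s ^ 2 / 2 + B1 * s) := by
    rw [hh0] at hle
    have := mul_le_mul_of_nonneg_right hle (Real.exp_pos (D * s ^ 2 / 2 + B1 * s)).le
    rw [hhdef] at this
    simp only [hφdef] at this
    rw [mul_assoc, ← Real.exp_add, neg_add_cancel, Real.exp_zero, mul_one, one_mul] at this
    exact this
  -- Chernoff bound
  have chern := measure_ge_le_exp_mul_mgf (X := Y) (μ := μ) t hspos.le (hmgf s ⟨hspos.le, hslt⟩)
  have hmgfeq : mgf Y μ s = m s := by rw [mgf]; exact (hm s).symm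
  rw [hmgfeq] at chern
  calc (μ {ω | t ≤ Y ω}).toReal ≤ Real.exp (-s * t) * m s := chern
    _ ≤ Real.exp (-s * t) * Real.exp (D * s ^ 2 / 2 + B1 * s) :=
        mul_le_mul_of_nonneg_left key (Real.exp_pos _).le
    _ = Real.exp (-(t * (t - 2 * B1)) / (2 * (σ2 + B2 + c * t))) := by
        rw [← Real.exp_add]
        congr 1
        rw [hs, ← hD]
        field_simp
        ring
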